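/- Let G be a graph with a set A ⊆ V(G) such that G \ A is a block graph. Suppose that for some vertex v ∈ V(G), the graph G contains k+1 induced subgraphs O_1, ..., O_{k+1}, each isomorphic to C4 or to the diamond, which pairwise intersect exactly in {v}. Then every set S ⊆ V(G) of size at most k with G \ S a block graph must contain v. -/

import Mathlib

/-- `{a,b,c,d}` induce a C4 in `G` (cycle a-b-c-d-a, with chords absent). -/
def IsInducedC4 {V : Type*} (G : SimpleGraph V) (a b c d : V) : Prop :=
  a ≠ b ∧ a ≠ c ∧ a ≠ d ∧ b ≠ c ∧ b ≠ d ∧ c ≠ d ∧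
  G.Adj a b ∧ G.Adj b c ∧ G.Adj c d ∧ G.Adj d a ∧ ¬ G.Adj a c ∧ ¬ G.Adj b d

/-- `{a,b,c,d}` induce a diamond (K4 minus the edge bd) in `G`. -/
def IsInducedDiamond {V : Type*} (G : SimpleGraph V) (a b c d : V) : Prop :=
  a ≠ b ∧ a ≠ c ∧ a ≠ d ∧ b ≠ c ∧ b ≠ d ∧ c ≠ d ∧
  G.Adj a b ∧ G.Adj b c ∧ G.Adj c d ∧ G.Adj d a ∧ G.Adj a c ∧ ¬ G.Adj b d


/-- `G` has an induced cycle of length at least 4. -/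
def HasLongInducedCycle {V : Type*} (G : SimpleGraph V) : Prop :=
  ∃ (n : ℕ) (f : ZMod n → V), 4 ≤ n ∧ Function.Injective f ∧
    ∀ i j : ZMod n, G.Adj (f i) (f j) ↔ (j = i + 1 ∨ i = j + 1)

/-- A block graph: no induced cycle of length ≥ 4 and no induced diamond. -/
def IsBlockGraph {V : Type*} (G : SimpleGraph V) : Prop :=
  ¬ HasLongInducedCycle G ∧ ∀ a b c d : V, ¬ IsInducedDiamond G a b c d

/-- `B` induces a (2-)connected subgraph of `G` with no cut vertex. -/
def IsBiconnectedSet {V : Type*} (G : SimpleGraph V) (B : Set V) : Prop :=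
  (G.induce B).Connected ∧ ∀ x ∈ B, (G.induce (B \ {x})).Preconnected

/-- `s` is the vertex set of an induced C4 or an induced diamond in `G`. -/
def IsObstruction {V : Type*} (G : SimpleGraph V) (s : Set V) : Prop :=
  ∃ a b c d : V, s = {a, b, c, d} ∧
    (IsInducedC4 G a b c d ∨ IsInducedDiamond G a b c d)


lemma obstruction_not_block {V : Type*} (G : SimpleGraph V) (s T : Set V)
    (h : ∃ a b c d : V, s = {a, b, c, d} ∧
      ((a ≠ b ∧ a ≠ c ∧ a ≠ d ∧ b ≠ c ∧ b ≠ d ∧ c ≠ d ∧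
        G.Adj a b ∧ G.Adj b c ∧ G.Adj c d ∧ G.Adj d a ∧ ¬ G.Adj a c ∧ ¬ G.Adj b d) ∨
       (a ≠ b ∧ a ≠ c ∧ a ≠ d ∧ b ≠ c ∧ b ≠ d ∧ c ≠ d ∧
        G.Adj a b ∧ G.Adj b c ∧ G.Adj c d ∧ G.Adj d a ∧ G.Adj a c ∧ ¬ G.Adj b d)))
    (hsub : s ⊆ T) :
    (∃ (n : ℕ) (f : ZMod n → T), 4 ≤ n ∧ Function.Injective f ∧
      ∀ i j : ZMod n, (G.induce T).Adj (f i) (f j) ↔ (j = i + 1 ∨ i = j + 1)) ∨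
    (∃ a b c d : T, (a:V) ≠ b ∧ (a:V) ≠ c ∧ (a:V) ≠ d ∧ (b:V) ≠ c ∧ (b:V) ≠ d ∧ (c:V) ≠ d ∧
      (G.induce T).Adj a b ∧ (G.induce T).Adj b c ∧ (G.induce T).Adj c d ∧
      (G.induce T).Adj d a ∧ (G.induce T).Adj a c ∧ ¬ (G.induce T).Adj b d) := by
  obtain ⟨a, b, c, d, hs, hcase⟩ := h
  have ha : a ∈ T := hsub (by simp [hs])
  have hb : b ∈ T := hsub (by simp [hs])
  have hc : c ∈ T := hsub (by simp [hs])
  have hd : d ∈ T := hsub (by simp [hs])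
  rcases hcase with ⟨hab, hac, had, hbc, hbd, hcd, e1, e2, e3, e4, n1, n2⟩ |
    ⟨hab, hac, had, hbc, hbd, hcd, e1, e2, e3, e4, e5, n2⟩
  · left
    refine ⟨4, ![⟨a, ha⟩, ⟨b, hb⟩, ⟨c, hc⟩, ⟨d, hd⟩], le_refl 4, ?_, ?_⟩
    · intro i j hij
      fin_cases i <;> fin_cases j <;> simp_all [Subtype.ext_iff] <;> tauto
    · intro i j
      fin_cases i <;> fin_cases j <;>
        simp_all (config := { decide := true }) [SimpleGraph.comap_adj,
          SimpleGraph.adj_comm, show ¬((0:ZMod 4)=1) by decide,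
          show ¬((2:ZMod 4)=1) by decide, show ¬((0:ZMod 4)=2+1) by decide,
          show ¬((3:ZMod 4)=1+1) by decide, show ¬((3:ZMod 4)=0) by decide,
          show ¬((1:ZMod 4)=0) by decide, show ¬((1:ZMod 4)=2) by decide,
          show ¬((2+1:ZMod 4)=0) by decide, show ¬((1+1:ZMod 4)=3) by decide,
          show ¬((0:ZMod 4)=3) by decide] <;> first | tauto | (simp only [ZMod] at * ; decide)
  · right
    exact ⟨⟨a, ha⟩, ⟨b, hb⟩, ⟨c, hc⟩, ⟨d, hd⟩, hab, hac, had, hbc, hbd, hcd,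
      e1, e2, e3, e4, e5, n2⟩


theorem stmt_13 {V : Type*} [Fintype V] (G : SimpleGraph V) (A : Set V)
    (hA : IsBlockGraph (G.induce Aᶜ)) (v : V) (k : ℕ)
    (O : Fin (k + 1) → Set V)
    (hobs : ∀ i, IsObstruction G (O i))
    (hv : ∀ i, v ∈ O i)
    (hpair : ∀ i j, i ≠ j → O i ∩ O j = {v}) :
    ∀ S : Set V, S.ncard ≤ k → IsBlockGraph (G.induce Sᶜ) → v ∈ S := by
  intro S hcard hblock
  by_contra hvS
  -- every obstruction must meet S
  have hmeet : ∀ i, (O i ∩ S).Nonempty := by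
    intro i
    rcases Set.eq_empty_or_nonempty (O i ∩ S) with h | h
    · exfalso
      have hsub : O i ⊆ Sᶜ := by
        intro x hx hxS
        have hmem : x ∈ O i ∩ S := ⟨hx, hxS⟩
        rw [h] at hmem
        exact hmem
      obtain ⟨a, b, c, d, hs, hcase⟩ := hobs i
      rcases obstruction_not_block G (O i) Sᶜ ⟨a, b, c, d, hs, hcase⟩ hsub with
        hcyc | ⟨a', b', c', d', h1, h2, h3, h4, h5, h6, e1, e2, e3, e4, e5, n2⟩
      · exact hblock.1 hcyc
      · have hdia : IsInducedDiamond (G.induce Sᶜ) a' b' c' d' :=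
          ⟨fun h => h1 (congrArg Subtype.val h), fun h => h2 (congrArg Subtype.val h),
           fun h => h3 (congrArg Subtype.val h), fun h => h4 (congrArg Subtype.val h),
           fun h => h5 (congrArg Subtype.val h), fun h => h6 (congrArg Subtype.val h),
           e1, e2, e3, e4, e5, n2⟩
        exact hblock.2 a' b' c' d' hdia
    · exact h
  choose f hf using hmeet
  have hfS : ∀ i, f i ∈ S := fun i => (hf i).2
  have hinj : Function.Injective f := by
    intro i j hij
    by_contra hne
    have hmem : f i ∈ O i ∩ O j := ⟨(hf i).1, hij ▸ (hf j).1⟩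
    rw [hpair i j hne] at hmem
    exact hvS (hmem ▸ hfS i)
  have hle : k + 1 ≤ S.ncard := by
    have h1 : (f '' Set.univ).ncard ≤ S.ncard :=
      Set.ncard_le_ncard (by rintro x ⟨i, -, rfl⟩; exact hfS i) (Set.toFinite S)
    rwa [Set.ncard_image_of_injective _ hinj, Set.ncard_univ, Nat.card_eq_fintype_card,
      Fintype.card_fin] at h1
  omega
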